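/- arXiv:1708.01298 — 4 statements merged into one kernel-verified Lean document; each statement's English description precedes it below -/
import Mathlib

section
/- Let A be a d×d real matrix with singular value decomposition A = U Σ Vᵀ, where U, V ∈ ℝ^{d×d} are orthogonal matrices and Σ ∈ ℝ^{d×d} is diagonal with nonnegative entries σ₁ ≥ σ₂ ≥ … ≥ σ_d. For k ≤ d, let U_k, V_k ∈ ℝ^{d×k} consist of the first k columns of U and V respectively, let Σ_k ∈ ℝ^{k×k} be the diagonal matrix with entries σ₁, …, σ_k, and let Σ_k† ∈ ℝ^{k×k} be the diagonal matrix whose i-th diagonal entry is 1/σᵢ if σᵢ ≠ 0 and 0 otherwise. Then the matrix V_k Σ_k† ∈ ℝ^{d×k} is a Moore–Penrose pseudoinverse of the sketched matrix U_kᵀ A ∈ ℝ^{k×d}; consequently, for every b ∈ ℝ^d, the truncated-SVD solution V_k Σ_k† U_kᵀ b equals (U_kᵀ A)† (U_kᵀ b), i.e., the left-sketched LSTD solution with sketching matrix S_L = U_kᵀ coincides with the tLSTD solution. -/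
open Matrix

/-- `P` is a Moore–Penrose pseudoinverse of `M`. -/
def IsMoorePenroseInv {k d : ℕ} (M : Matrix (Fin k) (Fin d) ℝ)
    (P : Matrix (Fin d) (Fin k) ℝ) : Prop :=
  M * P * M = M ∧ P * M * P = P ∧ (M * P)ᵀ = M * P ∧ (P * M)ᵀ = P * M

lemma mp_unique {k d : ℕ} {M : Matrix (Fin k) (Fin d) ℝ}
    {P1 P2 : Matrix (Fin d) (Fin k) ℝ}
    (h1 : IsMoorePenroseInv M P1) (h2 : IsMoorePenroseInv M P2) : P1 = P2 := by
  obtain ⟨h1a, h1b, h1c, h1d⟩ := h1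
  obtain ⟨h2a, h2b, h2c, h2d⟩ := h2
  have e1 : M * P1 = M * P2 := by
    have t : M * P1 = ((M * P1) * (M * P2))ᵀ := by
      rw [Matrix.transpose_mul, h1c, h2c]
      calc M * P1 = (M * P2 * M) * P1 := by rw [h2a]
      _ = (M * P2) * (M * P1) := by simp only [Matrix.mul_assoc]
    have t2 : (M * P1) * (M * P2) = M * P2 := by
      calc (M * P1) * (M * P2) = (M * P1 * M) * P2 := by simp only [Matrix.mul_assoc]
      _ = M * P2 := by rw [h1a]
    rw [t, t2, h2c]
  have e2 : P1 * M = P2 * M := by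
    have t : P1 * M = ((P2 * M) * (P1 * M))ᵀ := by
      rw [Matrix.transpose_mul, h1d, h2d]
      calc P1 * M = P1 * (M * P2 * M) := by rw [h2a]
      _ = (P1 * M) * (P2 * M) := by simp only [Matrix.mul_assoc]
    have t2 : (P2 * M) * (P1 * M) = P2 * M := by
      calc (P2 * M) * (P1 * M) = P2 * (M * P1 * M) := by simp only [Matrix.mul_assoc]
      _ = P2 * M := by rw [h1a]
    rw [t, t2, h2d]
  calc P1 = P1 * M * P1 := h1b.symm
  _ = (P2 * M) * P1 := by rw [e2]
  _ = P2 * (M * P1) := by simp only [Matrix.mul_assoc]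
  _ = P2 * (M * P2) := by rw [e1]
  _ = P2 := by rw [← Matrix.mul_assoc, h2b]

/-- If `A = U Σ Vᵀ` is an SVD, then `V_k Σ_k†` is a Moore–Penrose pseudoinverse
of the sketched matrix `U_kᵀ A`, and consequently the truncated-SVD (tLSTD)
solution `V_k Σ_k† U_kᵀ b` equals `(U_kᵀ A)† (U_kᵀ b)`, the left-sketched LSTD
solution with sketching matrix `S_L = U_kᵀ`. -/
theorem tLSTD_eq_left_sketched_LSTD
    (d k : ℕ) (hk : k ≤ d)
    (A U V : Matrix (Fin d) (Fin d) ℝ) (σ : Fin d → ℝ)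
    (hU : Uᵀ * U = 1) (hV : Vᵀ * V = 1)
    (hσ_nonneg : ∀ i, 0 ≤ σ i) (hσ_dec : Antitone σ)
    (hA : A = U * Matrix.diagonal σ * Vᵀ) :
    IsMoorePenroseInv ((U.submatrix id (Fin.castLE hk))ᵀ * A)
      ((V.submatrix id (Fin.castLE hk)) *
        Matrix.diagonal (fun i : Fin k =>
          if σ (Fin.castLE hk i) = 0 then 0 else (σ (Fin.castLE hk i))⁻¹)) ∧
    ∀ P : Matrix (Fin d) (Fin k) ℝ,
      IsMoorePenroseInv ((U.submatrix id (Fin.castLE hk))ᵀ * A) P →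
      ∀ b : Fin d → ℝ,
        ((V.submatrix id (Fin.castLE hk)) *
          Matrix.diagonal (fun i : Fin k =>
            if σ (Fin.castLE hk i) = 0 then 0 else (σ (Fin.castLE hk i))⁻¹)).mulVec
          ((U.submatrix id (Fin.castLE hk))ᵀ.mulVec b) =
        P.mulVec ((U.submatrix id (Fin.castLE hk))ᵀ.mulVec b) := by
  have hfinj : Function.Injective (Fin.castLE hk) := Fin.castLE_injective hk
  set e : Matrix (Fin k) (Fin d) ℝ :=
    (1 : Matrix (Fin d) (Fin d) ℝ).submatrix (Fin.castLE hk) id with he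
  set Sk : Matrix (Fin k) (Fin k) ℝ :=
    Matrix.diagonal (fun i => σ (Fin.castLE hk i)) with hSk
  set D : Matrix (Fin k) (Fin k) ℝ :=
    Matrix.diagonal (fun i : Fin k =>
      if σ (Fin.castLE hk i) = 0 then 0 else (σ (Fin.castLE hk i))⁻¹) with hD
  set J : Matrix (Fin k) (Fin k) ℝ :=
    Matrix.diagonal (fun i : Fin k =>
      if σ (Fin.castLE hk i) = 0 then (0:ℝ) else 1) with hJ
  have hUk : (U.submatrix id (Fin.castLE hk))ᵀ = e * Uᵀ := by
    ext i j
    simp [he, Matrix.mul_apply, Matrix.one_apply]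
  have hVk : V.submatrix id (Fin.castLE hk) = V * eᵀ := by
    ext i j
    simp [he, Matrix.mul_apply, Matrix.one_apply]
  have hee : e * eᵀ = (1 : Matrix (Fin k) (Fin k) ℝ) := by
    ext i j
    simp [he, Matrix.mul_apply, Matrix.one_apply, hfinj.eq_iff]
  have heSig : e * Matrix.diagonal σ = Sk * e := by
    ext i j
    simp only [he, hSk, Matrix.mul_diagonal, Matrix.diagonal_mul,
      Matrix.submatrix_apply, id]
    by_cases h : Fin.castLE hk i = j
    · subst h; ring
    · simp [Matrix.one_apply, h]
  have hSD : Sk * D = J := by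
    rw [hSk, hD, hJ, Matrix.diagonal_mul_diagonal]
    refine congrArg Matrix.diagonal (funext fun i => ?_)
    by_cases h : σ (Fin.castLE hk i) = 0 <;> simp [h, mul_inv_cancel₀]
  have hDS : D * Sk = J := by
    rw [hSk, hD, hJ, Matrix.diagonal_mul_diagonal]
    refine congrArg Matrix.diagonal (funext fun i => ?_)
    by_cases h : σ (Fin.castLE hk i) = 0 <;> simp [h, inv_mul_cancel₀]
  have hJS : J * Sk = Sk := by
    rw [hSk, hJ, Matrix.diagonal_mul_diagonal]
    refine congrArg Matrix.diagonal (funext fun i => ?_)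
    by_cases h : σ (Fin.castLE hk i) = 0 <;> simp [h]
  have hDJ : D * J = D := by
    rw [hD, hJ, Matrix.diagonal_mul_diagonal]
    refine congrArg Matrix.diagonal (funext fun i => ?_)
    by_cases h : σ (Fin.castLE hk i) = 0 <;> simp [h]
  have hJT : Jᵀ = J := Matrix.diagonal_transpose _
  -- the sketched matrix
  have hM : (U.submatrix id (Fin.castLE hk))ᵀ * A = Sk * e * Vᵀ := by
    rw [hUk, hA]
    calc e * Uᵀ * (U * Matrix.diagonal σ * Vᵀ)
        = e * ((Uᵀ * U) * (Matrix.diagonal σ * Vᵀ)) := by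
          simp only [Matrix.mul_assoc]
    _ = e * (Matrix.diagonal σ * Vᵀ) := by rw [hU, Matrix.one_mul]
    _ = (e * Matrix.diagonal σ) * Vᵀ := by rw [Matrix.mul_assoc]
    _ = Sk * e * Vᵀ := by rw [heSig]
  have hP : (V.submatrix id (Fin.castLE hk)) * D = V * eᵀ * D := by rw [hVk]
  set M : Matrix (Fin k) (Fin d) ℝ := Sk * e * Vᵀ with hMdef
  set P0 : Matrix (Fin d) (Fin k) ℝ := V * eᵀ * D with hP0def
  have hMP : M * P0 = J := by
    calc M * P0 = Sk * ((e * ((Vᵀ * V) * eᵀ)) * D) := by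
          simp only [hMdef, hP0def, Matrix.mul_assoc]
    _ = Sk * ((e * eᵀ) * D) := by rw [hV, Matrix.one_mul]
    _ = Sk * D := by rw [hee, Matrix.one_mul]
    _ = J := hSD
  have hPM : P0 * M = V * eᵀ * J * e * Vᵀ := by
    calc P0 * M = V * (eᵀ * ((D * Sk) * (e * Vᵀ))) := by
          simp only [hP0def, hMdef, Matrix.mul_assoc]
    _ = V * (eᵀ * (J * (e * Vᵀ))) := by rw [hDS]
    _ = V * eᵀ * J * e * Vᵀ := by simp only [Matrix.mul_assoc]
  have prop1 : M * P0 * M = M := by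
    rw [hMP, hMdef]
    calc J * (Sk * e * Vᵀ) = (J * Sk) * (e * Vᵀ) := by simp only [Matrix.mul_assoc]
    _ = Sk * e * Vᵀ := by rw [hJS, Matrix.mul_assoc]
  have prop2 : P0 * M * P0 = P0 := by
    rw [Matrix.mul_assoc, hMP, hP0def]
    calc V * eᵀ * D * J = V * eᵀ * (D * J) := by rw [Matrix.mul_assoc]
    _ = V * eᵀ * D := by rw [hDJ]
  have prop3 : (M * P0)ᵀ = M * P0 := by rw [hMP, hJT]
  have prop4 : (P0 * M)ᵀ = P0 * M := by
    rw [hPM]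
    simp only [Matrix.transpose_mul, Matrix.transpose_transpose, hJT]
    simp only [Matrix.mul_assoc]
  have hMPinv : IsMoorePenroseInv M P0 := ⟨prop1, prop2, prop3, prop4⟩
  have hrwM : (U.submatrix id (Fin.castLE hk))ᵀ * A = M := hM
  have hrwP : (V.submatrix id (Fin.castLE hk)) * D = P0 := hP
  constructor
  · rw [hrwM, hrwP]; exact hMPinv
  · intro P hPinv b
    rw [hrwM] at hPinv
    have : P = P0 := mp_unique hPinv hMPinv
    rw [this, hrwP]
end

section
/- Let A ∈ ℝ^{d×d} be symmetric positive semidefinite, let S ∈ ℝ^{k×d} be any matrix, and let P ∈ ℝ^{d×k} be a Moore–Penrose pseudoinverse of S A. Then for all α > 0 and η > 0, the null space of α P (S A) + η A equals the null space of A: for every x ∈ ℝ^d, (α P (S A) + η A) x = 0 if and only if A x = 0. -/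
open Matrix

/-- If `A` is symmetric positive semidefinite, `S` is any sketching matrix and
`P` is a Moore–Penrose pseudoinverse of `S A`, then for `α, η > 0` the
null space of `α P (S A) + η A` equals the null space of `A`. -/
theorem sketched_preconditioned_matrix_nullspace
    (d k : ℕ) (A : Matrix (Fin d) (Fin d) ℝ)
    (hAsymm : Aᵀ = A)
    (hApsd : ∀ x : Fin d → ℝ, 0 ≤ x ⬝ᵥ A.mulVec x)
    (S : Matrix (Fin k) (Fin d) ℝ) (P : Matrix (Fin d) (Fin k) ℝ)
    (hP : IsMoorePenroseInv (S * A) P)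
    (α η : ℝ) (hα : 0 < α) (hη : 0 < η) :
    ∀ x : Fin d → ℝ,
      (α • (P * (S * A)) + η • A).mulVec x = 0 ↔ A.mulVec x = 0 := by
  intro x
  have hA : A.PosSemidef := by
    refine Matrix.PosSemidef.of_dotProduct_mulVec_nonneg (by rwa [Matrix.IsHermitian, conjTranspose_eq_transpose_of_trivial]) ?_
    intro y
    simpa using hApsd y
  set M := S * A with hM
  set Q := P * M with hQ
  have hQidem : Q * Q = Q := by
    calc Q * Q = P * (M * P * M) := by rw [hQ]; simp only [Matrix.mul_assoc]
    _ = Q := by rw [hP.1]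
  have hQsymm : Qᵀ = Q := hP.2.2.2
  constructor
  · intro h
    -- dot with x
    have hdot : α * (x ⬝ᵥ Q.mulVec x) + η * (x ⬝ᵥ A.mulVec x) = 0 := by
      have := congrArg (fun v => x ⬝ᵥ v) h
      simpa [add_mulVec, smul_mulVec, dotProduct_add, dotProduct_smul,
        smul_eq_mul] using this
    have hsq : x ⬝ᵥ Q.mulVec x = (Q.mulVec x) ⬝ᵥ (Q.mulVec x) := by
      conv_lhs => rw [← hQidem]
      rw [← mulVec_mulVec, dotProduct_mulVec, ← mulVec_transpose, hQsymm]
    have hQnn : 0 ≤ x ⬝ᵥ Q.mulVec x := by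
      rw [hsq, dotProduct]
      exact Finset.sum_nonneg fun i _ => mul_self_nonneg _
    have hAnn := hApsd x
    have hAzero : x ⬝ᵥ A.mulVec x = 0 := by nlinarith
    have := (hA.dotProduct_mulVec_zero_iff x).mp (by simpa using hAzero)
    exact this
  · intro h
    have hQx : Q.mulVec x = 0 := by
      rw [hQ, hM, ← mulVec_mulVec, ← mulVec_mulVec, h, mulVec_zero, mulVec_zero]
    rw [add_mulVec, smul_mulVec, smul_mulVec, hQx, h, smul_zero,
      smul_zero, add_zero]
end

section
/- Let A ∈ ℝ^{d×d} be symmetric positive semidefinite and satisfy xᵀ A x ≤ L · xᵀ x for all x ∈ ℝ^d (for some L > 0). Let S ∈ ℝ^{k×d} be any matrix, let P ∈ ℝ^{d×k} be a Moore–Penrose pseudoinverse of S A, let α ∈ (0, 1/2) and let η > 0 satisfy η L ≤ 1/2. Set M := α P (S A) + η A. Then every eigenvalue of M lies in [0, 1): if M v = μ v for some v ≠ 0 and μ ∈ ℝ, then 0 ≤ μ < 1, and moreover μ = 0 if and only if A v = 0. Equivalently, every eigenvalue of I − M lies in (−1, 1], with the value 1 attained exactly on the null space of A. -/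
open Matrix

private lemma dp_self_nonneg {d : ℕ} (x : Fin d → ℝ) : 0 ≤ x ⬝ᵥ x := by
  simpa using dotProduct_self_star_nonneg x

set_option maxHeartbeats 1000000 in
/-- With `A` symmetric PSD satisfying `xᵀ A x ≤ L xᵀ x`, `P` a Moore–Penrose
pseudoinverse of `S A`, `α ∈ (0, 1/2)` and `η > 0` with `η L ≤ 1/2`, every
eigenvalue `μ` of `M = α P (S A) + η A` satisfies `0 ≤ μ < 1`, with `μ = 0`
exactly on the null space of `A`; equivalently every eigenvalue `ν` of `I − M`
satisfies `−1 < ν ≤ 1`, with `ν = 1` exactly on the null space of `A`. -/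
theorem sketched_preconditioned_matrix_eigenvalue_bounds
    (d k : ℕ) (A : Matrix (Fin d) (Fin d) ℝ)
    (L : ℝ) (hL : 0 < L)
    (hAsymm : Aᵀ = A)
    (hApsd : ∀ x : Fin d → ℝ, 0 ≤ x ⬝ᵥ A.mulVec x)
    (hAbound : ∀ x : Fin d → ℝ, x ⬝ᵥ A.mulVec x ≤ L * (x ⬝ᵥ x))
    (S : Matrix (Fin k) (Fin d) ℝ) (P : Matrix (Fin d) (Fin k) ℝ)
    (hP : IsMoorePenroseInv (S * A) P)
    (α η : ℝ) (hα : 0 < α) (hα' : α < 1 / 2) (hη : 0 < η) (hηL : η * L ≤ 1 / 2) :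
    (∀ v : Fin d → ℝ, v ≠ 0 → ∀ μ : ℝ,
        (α • (P * (S * A)) + η • A).mulVec v = μ • v →
        (0 ≤ μ ∧ μ < 1 ∧ (μ = 0 ↔ A.mulVec v = 0))) ∧
    (∀ v : Fin d → ℝ, v ≠ 0 → ∀ ν : ℝ,
        (1 - (α • (P * (S * A)) + η • A)).mulVec v = ν • v →
        (-1 < ν ∧ ν ≤ 1 ∧ (ν = 1 ↔ A.mulVec v = 0))) := by
  obtain ⟨h1, h2, h3, h4⟩ := hP
  set Q := P * (S * A) with hQdef
  have hQsymm : Qᵀ = Q := h4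
  have hQidem : Q * Q = Q := by
    calc Q * Q = (P * (S * A) * P) * (S * A) := by
          simp only [hQdef, Matrix.mul_assoc]
      _ = Q := by rw [h2]
  have hApsd' : A.PosSemidef := by
    refine Matrix.PosSemidef.of_dotProduct_mulVec_nonneg ?_ ?_
    · ext i j
      simpa [Matrix.conjTranspose, Matrix.transpose] using congrFun (congrFun hAsymm i) j
    · intro x
      simpa using hApsd x
  have key : ∀ v : Fin d → ℝ, v ≠ 0 → ∀ μ : ℝ,
      (α • Q + η • A).mulVec v = μ • v →
      (0 ≤ μ ∧ μ < 1 ∧ (μ = 0 ↔ A.mulVec v = 0)) := by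
    intro v hv μ hμ
    have hn : 0 < v ⬝ᵥ v :=
      lt_of_le_of_ne (dp_self_nonneg v)
        (fun h => hv ((dotProduct_self_eq_zero).mp h.symm))
    set n : ℝ := v ⬝ᵥ v with hndef
    set a : ℝ := v ⬝ᵥ A.mulVec v with hadef
    set q : ℝ := v ⬝ᵥ Q.mulVec v with hqdef
    set w : Fin d → ℝ := Q.mulVec v with hwdef
    have hvQ : v ᵥ* Q = w := by
      rw [← Matrix.mulVec_transpose, hQsymm]
    have hq_sq : q = w ⬝ᵥ w := by
      calc q = v ⬝ᵥ (Q * Q).mulVec v := by rw [hQidem]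
        _ = v ⬝ᵥ Q.mulVec (Q.mulVec v) := by rw [← Matrix.mulVec_mulVec]
        _ = (v ᵥ* Q) ⬝ᵥ Q.mulVec v := by rw [dotProduct_mulVec]
        _ = w ⬝ᵥ w := by rw [hvQ]
    have hq0 : 0 ≤ q := hq_sq ▸ dp_self_nonneg w
    have hwv : w ⬝ᵥ v = q := by
      rw [hqdef, dotProduct_comm]
    have hvw : v ⬝ᵥ w = q := hqdef
    have hqle : q ≤ n := by
      have h0 : 0 ≤ (v - w) ⬝ᵥ (v - w) := dp_self_nonneg _
      rw [sub_dotProduct, dotProduct_sub, dotProduct_sub, hvw, hwv, ← hq_sq] at h0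
      linarith
    have ha0 : 0 ≤ a := hApsd v
    have haL : a ≤ L * n := hAbound v
    have heig : α * q + η * a = μ * n := by
      have h := congrArg (fun x => v ⬝ᵥ x) hμ
      simp only [Matrix.add_mulVec, Matrix.smul_mulVec, dotProduct_add,
        dotProduct_smul, smul_eq_mul] at h
      exact h
    clear_value n a q w
    have hμ0 : 0 ≤ μ := by nlinarith
    have hμ1 : μ < 1 := by nlinarith
    refine ⟨hμ0, hμ1, ?_, ?_⟩
    · intro h0
      subst h0
      have ha' : a = 0 := by nlinarith
      rw [hadef] at ha'
      exact (hApsd'.dotProduct_mulVec_zero_iff v).mp (by simpa using ha')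
    · intro hAv
      have hQv : Q.mulVec v = 0 := by
        rw [hQdef, ← Matrix.mulVec_mulVec, ← Matrix.mulVec_mulVec, hAv,
          Matrix.mulVec_zero, Matrix.mulVec_zero]
      have hMv : (α • Q + η • A).mulVec v = 0 := by
        rw [Matrix.add_mulVec, Matrix.smul_mulVec, Matrix.smul_mulVec,
          hQv, hAv, smul_zero, smul_zero, add_zero]
      rw [hMv] at hμ
      rcases smul_eq_zero.mp hμ.symm with h | h
      · exact h
      · exact absurd h hv
  refine ⟨key, ?_⟩
  intro v hv ν hν
  have hν' : (α • Q + η • A).mulVec v = (1 - ν) • v := by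
    rw [Matrix.sub_mulVec, Matrix.one_mulVec] at hν
    have : (α • Q + η • A).mulVec v = v - ν • v := by
      rw [← hν]; abel
    rw [this, sub_smul, one_smul]
  obtain ⟨ha, hb, hc⟩ := key v hv (1 - ν) hν'
  refine ⟨by linarith, by linarith, ?_⟩
  constructor
  · intro h; exact hc.mp (by linarith)
  · intro h; have := hc.mpr h; linarith
end

section
/- (Convergence of the left-sketched quasi-Newton iteration.) Let A ∈ ℝ^{d×d} be symmetric positive semidefinite and satisfy xᵀ A x ≤ L · xᵀ x for all x (for some L > 0). Let S ∈ ℝ^{k×d} be any matrix and P ∈ ℝ^{d×k} a Moore–Penrose pseudoinverse of S A. Let α ∈ (0, 1/2) and η > 0 with η L ≤ 1/2, and set B := α P S + η I ∈ ℝ^{d×d}. Suppose b ∈ ℝ^d lies in the range of A. Then there is a unique vector w★ in the range of A with A w★ = b, and the iteration defined by w₀ = 0 and w_{t+1} = w_t + B (b − A w_t) converges to w★ as t → ∞. -/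
open Matrix Filter

set_option maxHeartbeats 1600000

/-- Convergence of the left-sketched quasi-Newton (ATD) iteration: with `A`
symmetric PSD satisfying `xᵀ A x ≤ L xᵀ x`, `P` a Moore–Penrose pseudoinverse
of `S A`, `α ∈ (0, 1/2)`, `η > 0` with `η L ≤ 1/2`, `B = α P S + η I`, and `b`
in the range of `A`, there is a unique `w★` in the range of `A` with
`A w★ = b`, and the iteration `w₀ = 0`, `w_{t+1} = w_t + B (b − A w_t)`
converges to `w★`. -/
theorem sketched_ATD_expected_update_converges
    (d k : ℕ) (A : Matrix (Fin d) (Fin d) ℝ)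
    (L : ℝ) (hL : 0 < L)
    (hAsymm : Aᵀ = A)
    (hApsd : ∀ x : Fin d → ℝ, 0 ≤ x ⬝ᵥ A.mulVec x)
    (hAbound : ∀ x : Fin d → ℝ, x ⬝ᵥ A.mulVec x ≤ L * (x ⬝ᵥ x))
    (S : Matrix (Fin k) (Fin d) ℝ) (P : Matrix (Fin d) (Fin k) ℝ)
    (hP : IsMoorePenroseInv (S * A) P)
    (α η : ℝ) (hα : 0 < α) (hα' : α < 1 / 2) (hη : 0 < η) (hηL : η * L ≤ 1 / 2)
    (B : Matrix (Fin d) (Fin d) ℝ) (hB : B = α • (P * S) + η • (1 : Matrix (Fin d) (Fin d) ℝ))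
    (b : Fin d → ℝ) (hb : b ∈ LinearMap.range A.mulVecLin) :
    ∃ wstar : Fin d → ℝ,
      (wstar ∈ LinearMap.range A.mulVecLin ∧ A.mulVec wstar = b) ∧
      (∀ w' : Fin d → ℝ,
        w' ∈ LinearMap.range A.mulVecLin → A.mulVec w' = b → w' = wstar) ∧
      (∀ w : ℕ → Fin d → ℝ, w 0 = 0 →
        (∀ t, w (t + 1) = w t + B.mulVec (b - A.mulVec (w t))) →
        Tendsto w atTop (nhds wstar)) := by
  classical
  -- basic facts about A
  have hAherm : A.IsHermitian := by
    rw [Matrix.IsHermitian, Matrix.conjTranspose_eq_transpose_of_trivial, hAsymm]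
  have hApsd' : A.PosSemidef :=
    Matrix.PosSemidef.of_dotProduct_mulVec_nonneg hAherm (fun x => by simpa using hApsd x)
  -- symmetric dot-product manipulation: v ⬝ᵥ (A *ᵥ z) = (A *ᵥ v) ⬝ᵥ z
  have hAdot : ∀ v z : Fin d → ℝ, v ⬝ᵥ (A *ᵥ z) = (A *ᵥ v) ⬝ᵥ z := by
    intro v z
    rw [dotProduct_mulVec, ← Matrix.mulVec_transpose, hAsymm]
  -- dot-product self nonneg
  have hdsn : ∀ x : Fin d → ℝ, 0 ≤ x ⬝ᵥ x := fun x =>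
    Finset.sum_nonneg fun i _ => mul_self_nonneg _
  ------------------------------------------------------------------
  -- Existence of wstar : range (A∘A) = range A
  ------------------------------------------------------------------
  set f := A.mulVecLin with hf
  have hker : LinearMap.ker (f ∘ₗ f) = LinearMap.ker f := by
    ext x
    simp only [LinearMap.mem_ker, LinearMap.comp_apply, hf, Matrix.mulVecLin_apply]
    constructor
    · intro h
      have h0 : (A *ᵥ x) ⬝ᵥ (A *ᵥ x) = 0 := by
        rw [← hAdot x (A *ᵥ x), h, dotProduct_zero]
      exact dotProduct_self_eq_zero.mp h0
    · intro h; rw [h, Matrix.mulVec_zero]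
  have hrange : LinearMap.range (f ∘ₗ f) = LinearMap.range f := by
    apply Submodule.eq_of_le_of_finrank_le (LinearMap.range_comp_le_range f f)
    have h1 := LinearMap.finrank_range_add_finrank_ker (f ∘ₗ f)
    have h2 := LinearMap.finrank_range_add_finrank_ker f
    rw [hker] at h1
    omega
  rw [← hrange] at hb
  obtain ⟨z, hz⟩ := hb
  simp only [LinearMap.comp_apply, hf, Matrix.mulVecLin_apply] at hz
  set wstar : Fin d → ℝ := A *ᵥ z with hwstar
  have hwmem : wstar ∈ LinearMap.range A.mulVecLin := ⟨z, rfl⟩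
  have hwb : A *ᵥ wstar = b := hz
  refine ⟨wstar, ⟨hwmem, hwb⟩, ?_, ?_⟩
  ------------------------------------------------------------------
  -- Uniqueness
  ------------------------------------------------------------------
  · intro w' hmem hw'
    obtain ⟨u, hu⟩ := hmem
    rw [Matrix.mulVecLin_apply] at hu
    have hexp : w' - wstar = A *ᵥ (u - z) := by
      rw [Matrix.mulVec_sub, hu, hwstar]
    have hdd : A *ᵥ (w' - wstar) = 0 := by
      rw [Matrix.mulVec_sub, hw', hwb, sub_self]
    have h0 : (w' - wstar) ⬝ᵥ (w' - wstar) = 0 := by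
      calc (w' - wstar) ⬝ᵥ (w' - wstar)
          = (w' - wstar) ⬝ᵥ (A *ᵥ (u - z)) := by rw [← hexp]
        _ = (A *ᵥ (w' - wstar)) ⬝ᵥ (u - z) := hAdot _ _
        _ = 0 := by rw [hdd, zero_dotProduct]
    exact sub_eq_zero.mp (dotProduct_self_eq_zero.mp h0)
  ------------------------------------------------------------------
  -- Convergence
  ------------------------------------------------------------------
  · intro w hw0 hwrec
    set M : Matrix (Fin k) (Fin d) ℝ := S * A with hM
    set Q : Matrix (Fin d) (Fin d) ℝ := P * M with hQ
    obtain ⟨hP1, hP2, hP3, hP4⟩ := hP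
    -- Q is a symmetric idempotent
    have hQsymm : Qᵀ = Q := hP4
    have hQidem : Q * Q = Q := by
      calc Q * Q = (P * M * P) * M := by
            rw [hQ, ← Matrix.mul_assoc]
        _ = Q := by rw [hP2, hQ]
    have hQself : ∀ x : Fin d → ℝ, x ⬝ᵥ (Q *ᵥ x) = (Q *ᵥ x) ⬝ᵥ (Q *ᵥ x) := by
      intro x
      conv_lhs => rw [← hQidem, ← Matrix.mulVec_mulVec, dotProduct_mulVec,
        ← Matrix.mulVec_transpose, hQsymm]
    have hQnonneg : ∀ x : Fin d → ℝ, 0 ≤ x ⬝ᵥ (Q *ᵥ x) := fun x => by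
      rw [hQself]; exact hdsn _
    have hQle : ∀ x : Fin d → ℝ, x ⬝ᵥ (Q *ᵥ x) ≤ x ⬝ᵥ x := by
      intro x
      rcases eq_or_lt_of_le (hQnonneg x) with h | h
      · rw [← h]; exact hdsn x
      · have hcs : (x ⬝ᵥ (Q *ᵥ x)) ^ 2 ≤ (x ⬝ᵥ x) * ((Q *ᵥ x) ⬝ᵥ (Q *ᵥ x)) := by
          simpa [dotProduct, pow_two] using
            Finset.sum_mul_sq_le_sq_mul_sq Finset.univ x (Q *ᵥ x)
        rw [← hQself x] at hcs
        have h2 : (x ⬝ᵥ (Q *ᵥ x)) * (x ⬝ᵥ (Q *ᵥ x)) ≤ (x ⬝ᵥ x) * (x ⬝ᵥ (Q *ᵥ x)) := by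
          nlinarith [hcs]
        exact le_of_mul_le_mul_right h2 h
    -- the iteration matrix T = B * A
    set T : Matrix (Fin d) (Fin d) ℝ := α • Q + η • A with hT
    have hBA : B * A = T := by
      rw [hB, hT, hQ, hM, add_mul, Matrix.smul_mul, Matrix.smul_mul, one_mul,
        Matrix.mul_assoc]
    have hTsymm : Tᵀ = T := by
      rw [hT, Matrix.transpose_add, Matrix.transpose_smul, Matrix.transpose_smul,
        hQsymm, hAsymm]
    have hTherm : T.IsHermitian := by
      rw [Matrix.IsHermitian, Matrix.conjTranspose_eq_transpose_of_trivial, hTsymm]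
    have hTform : ∀ x : Fin d → ℝ,
        x ⬝ᵥ (T *ᵥ x) = α * (x ⬝ᵥ (Q *ᵥ x)) + η * (x ⬝ᵥ (A *ᵥ x)) := by
      intro x
      rw [hT, Matrix.add_mulVec, Matrix.smul_mulVec, Matrix.smul_mulVec,
        dotProduct_add, dotProduct_smul, dotProduct_smul, smul_eq_mul, smul_eq_mul]
    have hTnonneg : ∀ x : Fin d → ℝ, 0 ≤ x ⬝ᵥ (T *ᵥ x) := by
      intro x
      rw [hTform]
      have := hQnonneg x
      have := hApsd x
      positivity
    have hTpsd : T.PosSemidef :=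
      Matrix.PosSemidef.of_dotProduct_mulVec_nonneg hTherm (fun x => by simpa using hTnonneg x)
    -- eigen data
    set v : Fin d → (Fin d → ℝ) := fun i => ⇑(hTherm.eigenvectorBasis i) with hv
    set μ : Fin d → ℝ := hTherm.eigenvalues with hμ
    have hEig : ∀ i, T *ᵥ v i = μ i • v i := fun i => hTherm.mulVec_eigenvectorBasis i
    have hvnorm : ∀ i, (v i) ⬝ᵥ (v i) = 1 := by
      intro i
      have h1 : (inner ℝ (hTherm.eigenvectorBasis i) (hTherm.eigenvectorBasis i) : ℝ) =
          (v i) ⬝ᵥ (v i) := rfl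
      have h2 := hTherm.eigenvectorBasis.orthonormal.1 i
      rw [← h1, real_inner_self_eq_norm_sq, h2, one_pow]
    have hμnonneg : ∀ i, 0 ≤ μ i := fun i => hTpsd.eigenvalues_nonneg i
    have hμval : ∀ i, (v i) ⬝ᵥ (T *ᵥ v i) = μ i := by
      intro i
      rw [hEig i, dotProduct_smul, smul_eq_mul, hvnorm i, mul_one]
    have hμle : ∀ i, μ i ≤ α + 1 / 2 := by
      intro i
      rw [← hμval i, hTform]
      have h1 := hQle (v i)
      have h2 := hAbound (v i)
      have h3 := hvnorm i
      rw [h3] at h1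
      nlinarith [hAbound (v i), hvnorm i]
    -- zero eigenvalues force A-kernel eigenvectors
    have hkerA : ∀ i, μ i = 0 → A *ᵥ v i = 0 := by
      intro i h0
      have hq : (v i) ⬝ᵥ (T *ᵥ v i) = 0 := by rw [hμval i, h0]
      rw [hTform] at hq
      have hA0 : (v i) ⬝ᵥ (A *ᵥ (v i)) = 0 := by
        have := hQnonneg (v i)
        have := hApsd (v i)
        nlinarith
      have := (hApsd'.dotProduct_mulVec_zero_iff (v i))
      simpa using this.mp (by simpa using hA0)
    -- eigen coefficients of the initial error -wstar
    set c : Fin d → ℝ := fun i => (v i) ⬝ᵥ (-wstar) with hc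
    have hczero : ∀ i, μ i = 0 → c i = 0 := by
      intro i h0
      have : (v i) ⬝ᵥ wstar = 0 := by
        rw [hwstar, hAdot, hkerA i h0, zero_dotProduct]
      simp [hc, this]
    have hrepr : ∑ i, c i • v i = -wstar := by
      have h := congrArg WithLp.ofLp ((hTherm.eigenvectorBasis).sum_repr'
        (WithLp.toLp 2 (-wstar : Fin d → ℝ) : EuclideanSpace ℝ (Fin d)))
      have heq : ∀ i, (inner ℝ (hTherm.eigenvectorBasis i)
          (WithLp.toLp 2 (-wstar : Fin d → ℝ) : EuclideanSpace ℝ (Fin d)) : ℝ) = c i := fun i => by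
        rw [EuclideanSpace.inner_eq_star_dotProduct, star_trivial, dotProduct_comm]
      simp_rw [heq] at h
      rw [WithLp.ofLp_sum] at h
      simpa only [WithLp.ofLp_smul, WithLp.ofLp_toLp] using h
    -- explicit formula for the iterates
    have key : ∀ t, w t = wstar + ∑ i, ((1 - μ i) ^ t * c i) • v i := by
      intro t
      induction t with
      | zero =>
        simp only [pow_zero, one_mul, hw0, hrepr]
        abel
      | succ t ih =>
        rw [hwrec t, ih]
        have hAs : A *ᵥ (wstar + ∑ i, ((1 - μ i) ^ t * c i) • v i)
            = b + A *ᵥ (∑ i, ((1 - μ i) ^ t * c i) • v i) := by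
          rw [Matrix.mulVec_add, hwb]
        rw [hAs]
        have hbm : b - (b + A *ᵥ (∑ i, ((1 - μ i) ^ t * c i) • v i))
            = -(A *ᵥ (∑ i, ((1 - μ i) ^ t * c i) • v i)) := by abel
        rw [hbm]
        have hBm : B *ᵥ (-(A *ᵥ (∑ i, ((1 - μ i) ^ t * c i) • v i)))
            = -(T *ᵥ (∑ i, ((1 - μ i) ^ t * c i) • v i)) := by
          rw [Matrix.mulVec_neg, Matrix.mulVec_mulVec, hBA]
        rw [hBm]
        have hTs : T *ᵥ (∑ i, ((1 - μ i) ^ t * c i) • v i)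
            = ∑ i, ((1 - μ i) ^ t * c i * μ i) • v i := by
          have : T *ᵥ (∑ i, ((1 - μ i) ^ t * c i) • v i)
              = T.mulVecLin (∑ i, ((1 - μ i) ^ t * c i) • v i) := rfl
          rw [this, map_sum]
          refine Finset.sum_congr rfl fun i _ => ?_
          rw [LinearMap.map_smul, Matrix.mulVecLin_apply, hEig i, smul_smul]
        rw [hTs]
        rw [← Finset.sum_neg_distrib, add_assoc, ← Finset.sum_add_distrib]
        congr 1
        refine Finset.sum_congr rfl fun i _ => ?_
        rw [← sub_eq_add_neg, ← sub_smul]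
        congr 1
        ring
    -- take limits
    have hF : Tendsto (fun t => ∑ i, ((1 - μ i) ^ t * c i) • v i) atTop
        (nhds (0 : Fin d → ℝ)) := by
      have : (0 : Fin d → ℝ) = ∑ i : Fin d, (0 : Fin d → ℝ) := by simp
      rw [this]
      refine tendsto_finset_sum _ fun i _ => ?_
      rcases eq_or_ne (c i) 0 with hci | hci
      · simp [hci]
      · have hμpos : 0 < μ i := by
          rcases lt_or_eq_of_le (hμnonneg i) with h | h
          · exact h
          · exact absurd (hczero i h.symm) hci
        have habs : |1 - μ i| < 1 := by
          rw [abs_lt]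
          constructor
          · have := hμle i; linarith
          · linarith
        have hpow : Tendsto (fun t : ℕ => (1 - μ i) ^ t) atTop (nhds 0) :=
          tendsto_pow_atTop_nhds_zero_of_abs_lt_one habs
        have hmul : Tendsto (fun t : ℕ => (1 - μ i) ^ t * c i) atTop (nhds 0) := by
          simpa using hpow.mul_const (c i)
        have := hmul.smul_const (v i)
        simpa using this
    have hfinal := (tendsto_const_nhds (x := wstar) (f := atTop)).add hF
    rw [add_zero] at hfinal
    refine hfinal.congr fun t => (key t).symm
end
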